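/- Let E be a separable metrizable space and L ⊆ P_t(E) a compact set of tight Borel probability measures (weak topology). Suppose A ⊆ L is a compact uniformly tight subset such that every compact subset of L disjoint from A is uniformly tight. Then L itself is uniformly tight. -/

import Mathlib

open MeasureTheory Metric Filter Set
open scoped ENNReal NNReal Topology

/-- Uniform tightness of a set of Borel probability measures. -/
def UnifTight {E : Type*} [TopologicalSpace E] [MeasurableSpace E]
    (S : Set (ProbabilityMeasure E)) : Prop :=
  ∀ ε : ℝ, 0 < ε → ∃ K : Set E, IsCompact K ∧ ∀ μ ∈ S, 1 - ε ≤ (μ K : ℝ)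

/-- Tightness of a single Borel probability measure. -/
def TightMeas {E : Type*} [TopologicalSpace E] [MeasurableSpace E]
    (μ : ProbabilityMeasure E) : Prop :=
  ∀ ε : ℝ, 0 < ε → ∃ K : Set E, IsCompact K ∧ 1 - ε ≤ (μ K : ℝ)

lemma aux_exists_pow {δ : ℝ} (hδ : 0 < δ) : ∃ j : ℕ, (1:ℝ)/2^j < δ := by
  obtain ⟨n, hn⟩ := exists_pow_lt_of_lt_one hδ (by norm_num : (1:ℝ)/2 < 1)
  exact ⟨n, by rwa [div_pow, one_pow] at hn⟩

lemma aux_pow_anti {i j : ℕ} (hij : i ≤ j) : (1:ℝ)/2^j ≤ (1:ℝ)/2^i :=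
  one_div_le_one_div_of_le (by positivity) (pow_le_pow_right₀ one_le_two hij)

lemma aux_isOpen_lt {E : Type*} [MetricSpace E] [MeasurableSpace E] [BorelSpace E]
    (G : Set E) (hG : IsOpen G) (c : ℝ≥0∞) :
    IsOpen {ν : ProbabilityMeasure E | c < (ν : Measure E) G} := by
  rw [isOpen_iff_mem_nhds]
  intro μ hμ
  have key : (μ : Measure E) G ≤ (𝓝 μ).liminf fun ν : ProbabilityMeasure E => (ν : Measure E) G :=
    ProbabilityMeasure.le_liminf_measure_open_of_tendsto tendsto_id hG
  exact Filter.eventually_lt_of_lt_liminf (lt_of_lt_of_le hμ key)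

lemma aux_ofReal_le {E : Type*} [MetricSpace E] [MeasurableSpace E]
    (μ : ProbabilityMeasure E) (S : Set E) (x : ℝ)
    (h : ENNReal.ofReal x ≤ (μ : Measure E) S) : x ≤ (μ S : ℝ) := by
  have hne : (μ : Measure E) S ≠ ⊤ := measure_ne_top _ _
  have := (ENNReal.ofReal_le_iff_le_toReal hne).mp h
  rwa [show ((μ S : ℝ≥0) : ℝ) = ((μ : Measure E) S).toReal by
    rw [← ProbabilityMeasure.ennreal_coeFn_eq_coeFn_toMeasure]; rfl]

lemma aux_le_ofReal {E : Type*} [MetricSpace E] [MeasurableSpace E]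
    (μ : ProbabilityMeasure E) (S : Set E) (x : ℝ)
    (h : x ≤ (μ S : ℝ)) : ENNReal.ofReal x ≤ (μ : Measure E) S := by
  have hne : (μ : Measure E) S ≠ ⊤ := measure_ne_top _ _
  rw [ENNReal.ofReal_le_iff_le_toReal hne]
  rwa [show ((μ S : ℝ≥0) : ℝ) = ((μ : Measure E) S).toReal by
    rw [← ProbabilityMeasure.ennreal_coeFn_eq_coeFn_toMeasure]; rfl] at h

lemma aux_isCompact_union {E : Type*} [MetricSpace E] (K : Set E) (hK : IsCompact K)
    (R : ℕ → Set E) (hR : ∀ j, IsCompact (R j))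
    (hsub : ∀ j, R j ⊆ Metric.cthickening ((1:ℝ)/2^j) K) :
    IsCompact (K ∪ ⋃ j, R j) := by
  rcases K.eq_empty_or_nonempty with hKe | hKne
  · have hRe : ∀ j, R j = ∅ := by
      intro j
      have := hsub j
      rw [hKe, Metric.cthickening_empty] at this
      exact eq_empty_of_subset_empty this
    simp only [hKe, iUnion_congr hRe, iUnion_empty, union_empty]
    exact isCompact_empty
  · rw [isCompact_iff_ultrafilter_le_nhds]
    intro f hf
    by_cases hc : ∃ j, (K ∪ ⋃ i ∈ Finset.range j, R i) ∈ f
    · obtain ⟨j, hj⟩ := hc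
      have hcpt : IsCompact (K ∪ ⋃ i ∈ Finset.range j, R i) :=
        hK.union ((Finset.range j).finite_toSet.isCompact_biUnion (fun i _ => hR i))
      obtain ⟨x, hx, hfx⟩ := hcpt.ultrafilter_le_nhds f (le_principal_iff.mpr hj)
      refine ⟨x, ?_, hfx⟩
      rcases hx with hx | hx
      · exact Or.inl hx
      · obtain ⟨i, _, hxi⟩ := mem_iUnion₂.mp hx
        exact Or.inr (mem_iUnion.mpr ⟨i, hxi⟩)
    · push_neg at hc
      have hT : (K ∪ ⋃ j, R j) ∈ f := le_principal_iff.mp hf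
      have hthick : ∀ j : ℕ, Metric.cthickening ((1:ℝ)/2^j) K ∈ f := by
        intro j
        have h1 : (K ∪ ⋃ i ∈ Finset.range (j+1), R i)ᶜ ∈ f :=
          Ultrafilter.compl_mem_iff_notMem.mpr (hc (j+1))
        refine mem_of_superset (inter_mem hT h1) ?_
        rintro x ⟨hxT, hxc⟩
        simp only [mem_compl_iff, mem_union, mem_iUnion, exists_prop, not_or, not_exists,
          not_and, Finset.mem_range] at hxc
        rcases hxT with hxK | hxR
        · exact absurd hxK hxc.1
        · obtain ⟨i, hxi⟩ := mem_iUnion.mp hxR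
          have hij : j + 1 ≤ i := by
            by_contra hlt
            exact hxc.2 i (by omega) hxi
          have : Metric.cthickening ((1:ℝ)/2^i) K ⊆ Metric.cthickening ((1:ℝ)/2^j) K := by
            apply Metric.cthickening_mono
            apply one_div_le_one_div_of_le (by positivity)
            exact pow_le_pow_right₀ one_le_two (by omega)
          exact this (hsub i hxi)
      -- now find a cluster point in K
      by_contra hno
      push_neg at hno
      have hball : ∀ y ∈ K, ∃ r > 0, Metric.ball y r ∉ f := by
        intro y hy
        have := hno y (Or.inl hy)
        rw [Filter.le_def] at this
        push_neg at this
        obtain ⟨s, hs, hsf⟩ := this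
        obtain ⟨r, hrpos, hball⟩ := Metric.mem_nhds_iff.mp hs
        exact ⟨r, hrpos, fun hb => hsf (mem_of_superset hb hball)⟩
      choose! r hr hrf using hball
      have hcover : K ⊆ ⋃ y ∈ K, Metric.ball y (r y / 2) := by
        intro y hy
        exact mem_biUnion hy (Metric.mem_ball_self (by linarith [hr y hy]))
      obtain ⟨t, htK, htfin, htcover⟩ :=
        hK.elim_finite_subcover_image (fun y _ => Metric.isOpen_ball) hcover
      obtain ⟨y₀, hy₀⟩ := hKne
      have htne : t.Nonempty := by
        obtain ⟨y, hy, _⟩ := mem_iUnion₂.mp (htcover hy₀)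
        exact ⟨y, hy⟩
      obtain ⟨δ, hδpos, hδle⟩ : ∃ δ > 0, ∀ y ∈ t, δ ≤ r y / 2 := by
        classical
        set s : Finset ℝ := htfin.toFinset.image (fun y => r y / 2) with hs
        have hsne : s.Nonempty := by
          obtain ⟨y, hy⟩ := htne
          exact ⟨r y / 2, Finset.mem_image_of_mem _ (htfin.mem_toFinset.mpr hy)⟩
        refine ⟨s.min' hsne, ?_, fun y hy => Finset.min'_le _ _
          (Finset.mem_image_of_mem _ (htfin.mem_toFinset.mpr hy))⟩
        obtain ⟨y, hy, hyeq⟩ := Finset.mem_image.mp (s.min'_mem hsne)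
        rw [← hyeq]
        have := hr y (htK (htfin.mem_toFinset.mp hy))
        linarith
      obtain ⟨j, hj⟩ : ∃ j : ℕ, (1:ℝ)/2^j < δ := by
        obtain ⟨n, hn⟩ := exists_pow_lt_of_lt_one hδpos (by norm_num : (1:ℝ)/2 < 1)
        exact ⟨n, by rwa [div_pow, one_pow] at hn⟩
      have hsubcover : Metric.cthickening ((1:ℝ)/2^j) K ⊆ ⋃ y ∈ t, Metric.ball y (r y) := by
        intro x hx
        have hx' : x ∈ Metric.thickening δ K :=
          Metric.cthickening_subset_thickening' hδpos hj K hx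
        obtain ⟨z, hzK, hz⟩ := Metric.mem_thickening_iff.mp hx'
        obtain ⟨y, hyt, hzy⟩ := mem_iUnion₂.mp (htcover hzK)
        refine mem_biUnion hyt ?_
        rw [Metric.mem_ball] at hzy ⊢
        have := hδle y hyt
        calc dist x y ≤ dist x z + dist z y := dist_triangle x z y
          _ < δ + r y / 2 := by linarith
          _ ≤ r y := by linarith
      have h1 : (⋃ y ∈ t, Metric.ball y (r y)) ∈ f := mem_of_superset (hthick j) hsubcover
      have h2 : (⋃ y ∈ t, Metric.ball y (r y))ᶜ ∈ f := by
        rw [compl_iUnion₂]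
        exact (Filter.biInter_mem htfin).mpr
          (fun y hy => Ultrafilter.compl_mem_iff_notMem.mpr (hrf y (htK hy)))
      have := inter_mem h1 h2
      rw [inter_compl_self] at this
      exact f.neBot.ne (empty_mem_iff_bot.mp this)

theorem stmt13 {E : Type*} [MetricSpace E] [TopologicalSpace.SeparableSpace E]
    [MeasurableSpace E] [BorelSpace E]
    (L : Set (ProbabilityMeasure E)) (hLcpt : IsCompact L)
    (hLt : ∀ μ ∈ L, TightMeas μ)
    (A : Set (ProbabilityMeasure E)) (hAcpt : IsCompact A) (hAL : A ⊆ L)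
    (hAut : UnifTight A)
    (hrest : ∀ S ⊆ L, IsCompact S → Disjoint S A → UnifTight S) :
    UnifTight L := by
  intro ε hε
  by_cases hε1 : 1 ≤ ε
  · exact ⟨∅, isCompact_empty, fun μ _ => le_trans (by linarith) (μ ∅).coe_nonneg⟩
  push_neg at hε1
  set ε' : ℝ := ε / 3 with hε'def
  have hε' : 0 < ε' := by rw [hε'def]; linarith
  have hε'1 : ε' < 1/3 := by rw [hε'def]; linarith
  obtain ⟨K₀, hK₀c, hK₀⟩ := hAut ε' hε'
  set U : ℕ → Set E := fun j => Metric.thickening ((1:ℝ)/2^j) K₀ with hU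
  set c : ℝ≥0∞ := ENNReal.ofReal (1 - 2*ε') with hc
  set W : ℕ → Set (ProbabilityMeasure E) := fun j => {ν | c < (ν : Measure E) (U j)} with hW
  have hWopen : ∀ j, IsOpen (W j) := fun j => aux_isOpen_lt _ Metric.isOpen_thickening c
  have hAW : ∀ j, A ⊆ W j := by
    intro j μ hμ
    have h1 : ENNReal.ofReal (1-ε') ≤ (μ : Measure E) K₀ := aux_le_ofReal μ K₀ _ (hK₀ μ hμ)
    have h2 : (μ : Measure E) K₀ ≤ (μ : Measure E) (U j) :=
      measure_mono (Metric.self_subset_thickening (by positivity) K₀)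
    refine lt_of_lt_of_le ?_ (le_trans h1 h2)
    rw [hc]
    exact (ENNReal.ofReal_lt_ofReal_iff (by linarith)).mpr (by linarith)
  have hScpt : ∀ j, IsCompact (L ∩ (W j)ᶜ) := fun j => hLcpt.inter_right (hWopen j).isClosed_compl
  have hSdisj : ∀ j, Disjoint (L ∩ (W j)ᶜ) A := by
    intro j
    refine Set.disjoint_left.mpr ?_
    rintro ν ⟨_, hν⟩ hνA
    exact hν (hAW j hνA)
  have hSut : ∀ j, ∃ Bj, IsCompact Bj ∧ ∀ μ ∈ L ∩ (W j)ᶜ, 1 - ε' ≤ (μ Bj : ℝ) :=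
    fun j => hrest _ inter_subset_left (hScpt j) (hSdisj j) ε' hε'
  choose B hBc hB using hSut
  set R : ℕ → Set E := fun j => B (j+1) ∩ Metric.cthickening ((1:ℝ)/2^j) K₀ with hR
  have hRc : ∀ j, IsCompact (R j) := fun j => (hBc (j+1)).inter_right Metric.isClosed_cthickening
  have hRsub : ∀ j, R j ⊆ Metric.cthickening ((1:ℝ)/2^j) (K₀ ∪ B 0) :=
    fun j => inter_subset_right.trans (Metric.cthickening_subset_of_subset _ subset_union_left)
  refine ⟨(K₀ ∪ B 0) ∪ ⋃ j, R j, aux_isCompact_union _ (hK₀c.union (hBc 0)) R hRc hRsub, ?_⟩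
  intro μ hμL
  apply aux_ofReal_le
  by_cases hall : ∀ j, μ ∈ W j
  · have hanti : Antitone U := fun i j hij => Metric.thickening_mono (aux_pow_anti hij) K₀
    have hlim := tendsto_measure_iInter_atTop (μ := (μ : Measure E))
      (fun j => (Metric.isOpen_thickening.measurableSet).nullMeasurableSet) hanti
      ⟨0, measure_ne_top _ _⟩
    have hIK : (⋂ j, U j) = K₀ := by
      apply Subset.antisymm
      · intro x hx
        rw [← hK₀c.isClosed.closure_eq]
        rw [Metric.mem_closure_iff]
        intro δ hδ
        obtain ⟨j, hj⟩ := aux_exists_pow hδ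
        obtain ⟨z, hz, hdz⟩ := Metric.mem_thickening_iff.mp (mem_iInter.mp hx j)
        exact ⟨z, hz, hdz.trans hj⟩
      · intro x hx
        exact mem_iInter.mpr fun j => Metric.self_subset_thickening (by positivity) K₀ hx
    have hcle : c ≤ (μ : Measure E) K₀ := by
      rw [← hIK]
      exact ge_of_tendsto hlim (Filter.Eventually.of_forall fun j => (hall j).le)
    calc ENNReal.ofReal (1-ε) ≤ c := by
          rw [hc]; exact ENNReal.ofReal_le_ofReal (by linarith)
      _ ≤ (μ : Measure E) K₀ := hcle
      _ ≤ _ := measure_mono (subset_union_left.trans subset_union_left)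
  · push_neg at hall
    classical
    have hj₀ : μ ∉ W (Nat.find hall) := Nat.find_spec hall
    by_cases h0 : Nat.find hall = 0
    · have hμS : μ ∈ L ∩ (W 0)ᶜ := ⟨hμL, h0 ▸ hj₀⟩
      have hB0 : ENNReal.ofReal (1-ε') ≤ (μ : Measure E) (B 0) :=
        aux_le_ofReal _ _ _ (hB 0 μ hμS)
      calc ENNReal.ofReal (1-ε) ≤ ENNReal.ofReal (1-ε') :=
            ENNReal.ofReal_le_ofReal (by linarith)
        _ ≤ (μ : Measure E) (B 0) := hB0
        _ ≤ _ := measure_mono (subset_union_right.trans subset_union_left)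
    · obtain ⟨j, hj⟩ := Nat.exists_eq_succ_of_ne_zero h0
      have hμW : μ ∈ W j := not_not.mp (Nat.find_min hall (by omega))
      rw [hj] at hj₀
      have hμS : μ ∈ L ∩ (W (j+1))ᶜ := ⟨hμL, hj₀⟩
      have hB1 : ENNReal.ofReal (1-ε') ≤ (μ : Measure E) (B (j+1)) :=
        aux_le_ofReal _ _ _ (hB (j+1) μ hμS)
      have hUj : c < (μ : Measure E) (U j) := hμW
      have hcomplU : (μ : Measure E) (U j)ᶜ ≤ ENNReal.ofReal (2*ε') := by
        rw [prob_compl_eq_one_sub Metric.isOpen_thickening.measurableSet]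
        refine (tsub_le_tsub_left hUj.le 1).trans ?_
        rw [hc, ← ENNReal.ofReal_one, ← ENNReal.ofReal_sub _ (by linarith)]
        exact ENNReal.ofReal_le_ofReal (by linarith)
      have hcomplB : (μ : Measure E) (B (j+1))ᶜ ≤ ENNReal.ofReal ε' := by
        rw [prob_compl_eq_one_sub (hBc (j+1)).isClosed.measurableSet]
        refine (tsub_le_tsub_left hB1 1).trans ?_
        rw [← ENNReal.ofReal_one, ← ENNReal.ofReal_sub _ (by linarith)]
        exact ENNReal.ofReal_le_ofReal (by linarith)
      have hcomplR : (μ : Measure E) (R j)ᶜ ≤ ENNReal.ofReal ε := by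
        have hsubs : (R j)ᶜ ⊆ (B (j+1))ᶜ ∪ (U j)ᶜ := by
          rw [hR]
          simp only [compl_inter]
          apply union_subset_union_right
          exact compl_subset_compl.mpr (Metric.thickening_subset_cthickening _ _)
        calc (μ : Measure E) (R j)ᶜ ≤ (μ : Measure E) ((B (j+1))ᶜ ∪ (U j)ᶜ) :=
              measure_mono hsubs
          _ ≤ (μ : Measure E) (B (j+1))ᶜ + (μ : Measure E) (U j)ᶜ := measure_union_le _ _
          _ ≤ ENNReal.ofReal ε' + ENNReal.ofReal (2*ε') := add_le_add hcomplB hcomplU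
          _ = ENNReal.ofReal ε := by
              rw [← ENNReal.ofReal_add (by linarith) (by linarith)]
              congr 1
              rw [hε'def]; ring
      have hRge : ENNReal.ofReal (1-ε) ≤ (μ : Measure E) (R j) := by
        have hmeas : MeasurableSet (R j) := (hRc j).isClosed.measurableSet
        have heq : (μ : Measure E) (R j) = 1 - (μ : Measure E) (R j)ᶜ := by
          rw [prob_compl_eq_one_sub hmeas,
            ENNReal.sub_sub_cancel (by norm_num) prob_le_one]
        rw [heq]
        refine ENNReal.le_sub_of_add_le_right (measure_ne_top _ _) ?_
        calc ENNReal.ofReal (1-ε) + (μ : Measure E) (R j)ᶜ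
            ≤ ENNReal.ofReal (1-ε) + ENNReal.ofReal ε := add_le_add_right hcomplR _
          _ = ENNReal.ofReal 1 := by
              rw [← ENNReal.ofReal_add (by linarith) (le_of_lt hε)]; norm_num
          _ = 1 := ENNReal.ofReal_one
      refine hRge.trans (measure_mono ?_)
      exact (subset_iUnion R j).trans subset_union_right
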